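/- Let V be a finite antichain of Lyndon words over a well-ordered alphabet X. Then for n > #(V \ X) + 1 there are no (n−1)-ambiguities on V; that is, A_n(V) = ∅. -/

import Mathlib

variable {X : Type*} [LinearOrder X] [WellFoundedLT X]

/-- The partial order `≺` on words: `u ≺ v` iff `u = r ++ x :: s`, `v = r ++ y :: t`
with letters `x < y`. -/
def Prec (u v : List X) : Prop :=
  ∃ (r s t : List X) (x y : X), x < y ∧ u = r ++ x :: s ∧ v = r ++ y :: t

/-- The pseudo-lexicographic order: `u <_lex v` iff `v` is a proper prefix of `u` or `u ≺ v`. -/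
def PLex (u v : List X) : Prop :=
  (v <+: u ∧ v ≠ u) ∨ Prec u v

/-- `u ≤_lex v`. -/
def PLexLe (u v : List X) : Prop := u = v ∨ PLex u v

/-- A Lyndon word (Kharchenko convention): a nonempty word strictly greater in the
pseudo-lexicographic order than each of its proper nonempty suffixes. -/
def IsLyndon (u : List X) : Prop :=
  u ≠ [] ∧ ∀ v w : List X, u = v ++ w → v ≠ [] → w ≠ [] → PLex w u


/-- `w` has no factor belonging to `V`. -/
def NoFactorIn (V : Set (List X)) (w : List X) : Prop := ∀ f ∈ V, ¬ f <:+: w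

/-- The chain conditions defining a `p`-ambiguity decomposition `w = v₁ v₂ ⋯ v_{p+1}`. -/
def IsAmbiguityChain (V : Set (List X)) (vs : List (List X)) : Prop :=
  (∃ x : X, vs.headI = [x] ∧ [x] ∉ V) ∧
  (∀ v ∈ vs.tail, v ≠ [] ∧ NoFactorIn V v) ∧
  vs.Chain' (fun a b =>
    (∃ f ∈ V, f <:+: a ++ b) ∧ ∀ t, t <+: b → t ≠ b → NoFactorIn V (a ++ t))

/-- `A_n(V)`: `A_0(V) = {1}`, `A_1(V) = X \ V`, `A_2(V) = V \ X`, and for `n ≥ 3`,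
`A_n(V)` is the set of `(n-1)`-ambiguities on `V`. -/
def ambiguitySet (V : Set (List X)) : ℕ → Set (List X)
  | 0 => {([] : List X)}
  | 1 => {w | ∃ x : X, w = [x] ∧ w ∉ V}
  | 2 => {w | w ∈ V ∧ w.length ≠ 1}
  | (n + 3) => {w | ∃ vs : List (List X), vs.length = n + 3 ∧ w = vs.flatten ∧
      IsAmbiguityChain V vs}

/-- Shape of an obstruction: the factor `f ∈ V` witnessing the chain condition for a
pair `(a, b)` must be of the form `s ++ b` with `s` a nonempty suffix of `a`. -/
lemma shape_lemma {V : Set (List X)} {a b : List X} (hb : b ≠ []) (hbf : NoFactorIn V b)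
    (hex : ∃ f ∈ V, f <:+: a ++ b)
    (H : ∀ t, t <+: b → t ≠ b → NoFactorIn V (a ++ t)) :
    ∃ f s, f ∈ V ∧ s ≠ [] ∧ s <:+ a ∧ f = s ++ b := by
  obtain ⟨f, hfV, p, q, hpq⟩ := hex
  have hq : q = [] := by
    by_contra hq
    refine H b.dropLast (List.dropLast_prefix b) ?_ f hfV ⟨p, q.dropLast, ?_⟩
    · intro h
      have hlen := congrArg List.length h
      rw [List.length_dropLast] at hlen
      have hbl : 0 < b.length := List.length_pos_iff.mpr hb
      omega
    · have h1 : (p ++ f ++ q).dropLast = (p ++ f) ++ q.dropLast :=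
        List.dropLast_append_of_ne_nil hq
      have h2 : (a ++ b).dropLast = a ++ b.dropLast :=
        List.dropLast_append_of_ne_nil hb
      rw [← h2, ← hpq, h1]
  subst hq
  rw [List.append_nil] at hpq
  rcases List.append_eq_append_iff.mp hpq with ⟨s, ha, hf⟩ | ⟨c, _, hbe⟩
  · refine ⟨f, s, hfV, ?_, ⟨p, ha.symm⟩, hf⟩
    rintro rfl
    exact hbf f hfV ⟨[], [], by simp [hf]⟩
  · exact absurd (show f <:+: b from ⟨c, [], by simp [hbe]⟩) (hbf f hfV)

lemma prec_append {u v : List X} (h : Prec u v) (w : List X) : Prec (u ++ w) v := by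
  obtain ⟨r, s, t, x, y, hxy, hu, hv⟩ := h
  subst hu; subst hv
  exact ⟨r, s ++ w, t, x, y, hxy, by simp, rfl⟩

lemma prec_lex {u v : List X} (h : Prec u v) : List.Lex (· < ·) u v := by
  obtain ⟨r, s, t, x, y, hxy, hu, hv⟩ := h
  subst hu; subst hv
  induction r with
  | nil => exact List.Lex.rel hxy
  | cons a r ih => exact List.Lex.cons ih

/-- Consecutive obstructions strictly decrease in the order `≺`. -/
lemma step_lemma {V : Set (List X)} (hLyndon : ∀ v ∈ V, IsLyndon v)
    {fi fj si sj b c : List X} (hfi : fi = si ++ b) (hsi : si ≠ [])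
    (hfiV : fi ∈ V) (hsj : sj ≠ []) (hsuf : sj <:+ b) (hfj : fj = sj ++ c) :
    Prec fj fi := by
  obtain ⟨d, hd⟩ := hsuf
  have hdecomp : fi = (si ++ d) ++ sj := by
    rw [hfi, ← hd, List.append_assoc]
  have hpl : PLex sj fi :=
    (hLyndon fi hfiV).2 (si ++ d) sj hdecomp (by simp [hsi]) hsj
  rcases hpl with ⟨hpre, _⟩ | hprec
  · exfalso
    have h1 := hpre.length_le
    have h2 : sj.length < fi.length := by
      rw [hdecomp]
      simp only [List.length_append]
      have h3 : 0 < si.length := List.length_pos_iff.mpr hsi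
      omega
    omega
  · rw [hfj]
    exact prec_append hprec c

/-- If `V` is a finite antichain of Lyndon words, then
`A_n(V) = ∅` for all `n > #(V \ X) + 1`. -/
theorem ambiguitySet_eq_empty (V : Set (List X)) (hfin : V.Finite)
    (hLyndon : ∀ v ∈ V, IsLyndon v)
    (hanti : ∀ u ∈ V, ∀ v : List X, v <:+: u → v ≠ u → v ∉ V)
    (n : ℕ) (hn : {v | v ∈ V ∧ v.length ≠ 1}.encard + 1 < (n : ℕ∞)) :
    ambiguitySet V n = ∅ := by
  match n with
  | 0 => exact absurd hn (by push_cast; exact not_lt.mpr zero_le)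
  | 1 => exact absurd hn (by push_cast; exact not_lt.mpr le_add_self)
  | 2 =>
    have h2 : ((2 : ℕ) : ℕ∞) = 1 + 1 := by norm_num
    rw [h2] at hn
    have h0 : {v | v ∈ V ∧ v.length ≠ 1}.encard = 0 :=
      ENat.lt_one_iff_eq_zero.mp ((ENat.add_lt_add_iff_right (by simp)).mp hn)
    have : ambiguitySet V 2 = {w : List X | w ∈ V ∧ w.length ≠ 1} := rfl
    rw [this]
    exact Set.encard_eq_zero.mp h0
  | (m + 3) =>
    apply Set.eq_empty_iff_forall_notMem.mpr
    intro w hw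
    have hw' : ∃ vs : List (List X), vs.length = m + 3 ∧ w = vs.flatten ∧
        IsAmbiguityChain V vs := hw
    obtain ⟨vs, hlen, -, -, htail, hchain⟩ := hw'
    set S := {v | v ∈ V ∧ v.length ≠ 1} with hSdef
    set v : ℕ → List X := fun i => vs.getD i [] with hvdef
    have hvget : ∀ i (h : i < vs.length), v i = vs.get ⟨i, h⟩ := by
      intro i h
      simp [hvdef, List.getD, List.getElem?_eq_getElem h, List.get_eq_getElem]
    have hchain' := List.isChain_iff_getElem.mp hchain
    have hR : ∀ i, i + 1 < vs.length →
        (∃ f ∈ V, f <:+: v i ++ v (i + 1)) ∧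
        ∀ t, t <+: v (i + 1) → t ≠ v (i + 1) → NoFactorIn V (v i ++ t) := by
      intro i hi
      have h := hchain' i (by omega)
      rw [hvget i (by omega), hvget (i + 1) hi]
      exact h
    have htl : ∀ i, 0 < i → i < vs.length → v i ≠ [] ∧ NoFactorIn V (v i) := by
      intro i h0 hi
      apply htail
      have h1 : i - 1 < vs.tail.length := by rw [List.length_tail]; omega
      have h2 : v i = vs.tail[i - 1] := by
        rw [List.getElem_tail, hvget i hi, List.get_eq_getElem]
        congr 1
        show i = i - 1 + 1
        omega
      rw [h2]
      exact List.getElem_mem _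
    have key : ∀ i, i + 1 < vs.length →
        ∃ f s, f ∈ V ∧ s ≠ [] ∧ s <:+ v i ∧ f = s ++ v (i + 1) := by
      intro i hi
      obtain ⟨hb, hbf⟩ := htl (i + 1) (by omega) hi
      obtain ⟨hex, H⟩ := hR i hi
      exact shape_lemma hb hbf hex H
    choose f s hfV hs hsuf heq using key
    set g : ℕ → List X := fun i => if h : i + 1 < vs.length then f i h else [] with hgdef
    have hg : ∀ i (h : i + 1 < vs.length), g i = f i h := by
      intro i h
      simp only [hgdef, dif_pos h]
    have hdec : ∀ i, i + 2 < vs.length → List.Lex (· < ·) (g (i + 1)) (g i) := by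
      intro i hi
      have hi1 : i + 1 < vs.length := by omega
      have hi2 : (i + 1) + 1 < vs.length := by omega
      rw [hg i hi1, hg (i + 1) hi2]
      exact prec_lex (step_lemma hLyndon (heq i hi1) (hs i hi1) (hfV i hi1)
        (hs (i + 1) hi2) (hsuf (i + 1) hi2) (heq (i + 1) hi2))
    have hlt : ∀ j, j + 1 < vs.length → ∀ i, i < j → List.Lex (· < ·) (g j) (g i) := by
      intro j
      induction j with
      | zero => intro _ i hi; omega
      | succ k ih =>
        intro hj i hij
        rcases Nat.lt_or_ge i k with h | h
        · exact List.lex_trans lt_trans (hdec k (by omega)) (ih (by omega) i h)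
        · have : i = k := by omega
          subst this
          exact hdec i (by omega)
    have hmaps : Set.MapsTo g ↑(Finset.range (m + 2)) S := by
      intro i hi
      simp only [Finset.coe_range, Set.mem_Iio] at hi
      have h1 : i + 1 < vs.length := by omega
      rw [hg i h1]
      refine ⟨hfV i h1, ?_⟩
      have hvne : v (i + 1) ≠ [] := (htl (i + 1) (by omega) h1).1
      have := heq i h1
      have hlen1 : (f i h1).length = (s i h1).length + (v (i + 1)).length := by
        rw [this]; simp
      have h2 : 0 < (s i h1).length := List.length_pos_iff.mpr (hs i h1)
      have h3 : 0 < (v (i + 1)).length := List.length_pos_iff.mpr hvne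
      omega
    have hinj : Set.InjOn g ↑(Finset.range (m + 2)) := by
      intro i hi j hj hij
      simp only [Finset.coe_range, Set.mem_Iio] at hi hj
      by_contra hne
      rcases Nat.lt_or_ge i j with h | h
      · have hL := hlt j (by omega) i h
        rw [hij] at hL
        exact asymm hL hL
      · have h' : j < i := by omega
        have hL := hlt i (by omega) j h'
        rw [hij] at hL
        exact asymm hL hL
    have hcard := Set.encard_le_encard_of_injOn hmaps hinj
    rw [Set.encard_coe_eq_coe_finsetCard, Finset.card_range] at hcard
    have hfin' : ((m + 3 : ℕ) : ℕ∞) ≤ S.encard + 1 := by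
      push_cast at hcard ⊢
      calc ((m : ℕ∞) + 3) = ((m : ℕ∞) + 2) + 1 := by ring
        _ ≤ S.encard + 1 := add_le_add_left hcard 1
    exact absurd hn (not_lt.mpr hfin')
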